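/- Let (V, P) be a finite irreducible Markov chain with stationary distribution π. Then for every eigenvalue λ ∈ ℂ of P (regarded as a complex matrix) with λ ≠ 1 and every natural number t, (1/2)·|λ|^t ≤ max_{x∈V} ‖P^t(x,·) − π‖_TV. -/

import Mathlib

open scoped Classical

noncomputable section

namespace Stmt10

variable {V : Type*} [Fintype V]

/-- total variation distance between two distributions on `V`. -/
def tv (σ τ : V → ℝ) : ℝ := (1 / 2) * ∑ y, |σ y - τ y|

/-- Lower bound on mixing: for a finite irreducible Markov chain, every complex
eigenvalue `λ ≠ 1` satisfies `(1/2)|λ|^t ≤ max_x ‖P^t(x,·) − π‖_TV`. -/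
theorem stmt10 {V : Type*} [Fintype V] [Nonempty V] (P : V → V → ℝ) (pi : V → ℝ)
    (hP0 : ∀ x y, 0 ≤ P x y) (hP1 : ∀ x, ∑ y, P x y = 1)
    (hirr : ∀ x y : V, ∃ t : ℕ, 0 < (Matrix.of P ^ t) x y)
    (hpi0 : ∀ x, 0 < pi x) (hpi1 : ∑ x, pi x = 1)
    (hstat : ∀ y, ∑ x, pi x * P x y = pi y)
    (lam : ℂ) (hlam : lam ≠ 1)
    (hev : ∃ g : V → ℂ, g ≠ 0 ∧ ∀ x, ∑ y, (P x y : ℂ) * g y = lam * g x)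
    (t : ℕ) :
    (1 / 2) * ‖lam‖ ^ t ≤
      Finset.univ.sup' Finset.univ_nonempty fun x =>
        tv (fun y => (Matrix.of P ^ t) x y) pi := by
  obtain ⟨g, hg0, hg⟩ := hev
  set Q : Matrix V V ℝ := Matrix.of P with hQ
  -- iterated eigen relation
  have hiter : ∀ s : ℕ, ∀ x, ∑ y, ((Q ^ s) x y : ℂ) * g y = lam ^ s * g x := by
    intro s
    induction s with
    | zero =>
      intro x
      simp [Matrix.one_apply, apply_ite (fun r : ℝ => (r : ℂ))]
    | succ n ih =>
      intro x
      have hentry : ∀ y, (Q ^ (n + 1)) x y = ∑ z, P x z * (Q ^ n) z y := by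
        intro y
        rw [pow_succ']
        simp [Matrix.mul_apply, hQ]
      calc ∑ y, ((Q ^ (n + 1)) x y : ℂ) * g y
          = ∑ y, (∑ z, (P x z : ℂ) * ((Q ^ n) z y : ℂ)) * g y := by
            refine Finset.sum_congr rfl fun y _ => ?_
            rw [hentry y]
            push_cast
            ring
        _ = ∑ z, (P x z : ℂ) * ∑ y, ((Q ^ n) z y : ℂ) * g y := by
            simp only [Finset.sum_mul]
            rw [Finset.sum_comm]
            simp [Finset.mul_sum, mul_assoc]
        _ = ∑ z, (P x z : ℂ) * (lam ^ n * g z) := by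
            simp only [ih]
        _ = lam ^ n * ∑ z, (P x z : ℂ) * g z := by
            rw [Finset.mul_sum]; refine Finset.sum_congr rfl fun z _ => ?_; ring
        _ = lam ^ (n + 1) * g x := by rw [hg x]; ring
  -- ∑ π g = 0
  have horth : ∑ y, (pi y : ℂ) * g y = 0 := by
    have h1 : ∑ x, (pi x : ℂ) * ∑ y, (P x y : ℂ) * g y = lam * ∑ y, (pi y : ℂ) * g y := by
      rw [Finset.mul_sum]
      refine Finset.sum_congr rfl fun x _ => ?_
      rw [hg x]; ring
    have h2 : ∑ x, (pi x : ℂ) * ∑ y, (P x y : ℂ) * g y = ∑ y, (pi y : ℂ) * g y := by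
      calc ∑ x, (pi x : ℂ) * ∑ y, (P x y : ℂ) * g y
          = ∑ y, (∑ x, (pi x : ℂ) * (P x y : ℂ)) * g y := by
            simp only [Finset.mul_sum]
            rw [Finset.sum_comm]
            simp [Finset.sum_mul, mul_assoc]
        _ = ∑ y, (pi y : ℂ) * g y := by
            refine Finset.sum_congr rfl fun y _ => ?_
            have : ∑ x, (pi x : ℂ) * (P x y : ℂ) = (pi y : ℂ) := by
              push_cast [← hstat y]
              rfl
            rw [this]
      
    have h3 : (lam - 1) * ∑ y, (pi y : ℂ) * g y = 0 := by
      rw [sub_mul, one_mul, ← h1, h2, sub_self]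
    rcases mul_eq_zero.mp h3 with h | h
    · exact absurd (sub_eq_zero.mp h) hlam
    · exact h
  -- choose maximizer of |g|
  obtain ⟨x0, -, hx0⟩ := Finset.exists_max_image Finset.univ (fun x => ‖g x‖)
    ⟨Classical.arbitrary V, Finset.mem_univ _⟩
  have hgx0 : 0 < ‖g x0‖ := by
    rcases Function.ne_iff.mp hg0 with ⟨z, hz⟩
    have := hx0 z (Finset.mem_univ z)
    have hz' : 0 < ‖g z‖ := by simpa [norm_pos_iff] using hz
    linarith
  -- key identity
  have hkey : lam ^ t * g x0 = ∑ y, (((Q ^ t) x0 y : ℝ) - (pi y : ℝ) : ℂ) * g y := by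
    have := hiter t x0
    rw [← this]
    rw [← sub_zero (∑ y, ((Q ^ t) x0 y : ℂ) * g y), ← horth, ← Finset.sum_sub_distrib]
    refine Finset.sum_congr rfl fun y _ => ?_
    push_cast
    ring
  have hbound : ‖lam‖ ^ t * ‖g x0‖
      ≤ (∑ y, |(Q ^ t) x0 y - pi y|) * ‖g x0‖ := by
    calc ‖lam‖ ^ t * ‖g x0‖
        = ‖lam ^ t * g x0‖ := by simp [norm_mul, norm_pow]
      _ = ‖∑ y, (((Q ^ t) x0 y : ℝ) - (pi y : ℝ) : ℂ) * g y‖ := by rw [hkey]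
      _ ≤ ∑ y, ‖(((Q ^ t) x0 y : ℝ) - (pi y : ℝ) : ℂ) * g y‖ := by
          exact norm_sum_le _ _
      _ ≤ ∑ y, |(Q ^ t) x0 y - pi y| * ‖g x0‖ := by
          refine Finset.sum_le_sum fun y _ => ?_
          rw [norm_mul]
          have h1 : ‖(((Q ^ t) x0 y : ℝ) - (pi y : ℝ) : ℂ)‖
              = |(Q ^ t) x0 y - pi y| := by
            rw [← Complex.ofReal_sub, Complex.norm_real, Real.norm_eq_abs]
          rw [h1]
          exact mul_le_mul_of_nonneg_left (hx0 y (Finset.mem_univ y)) (abs_nonneg _)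
      _ = (∑ y, |(Q ^ t) x0 y - pi y|) * ‖g x0‖ := by
          rw [Finset.sum_mul]
  have habs : ‖lam‖ ^ t ≤ ∑ y, |(Q ^ t) x0 y - pi y| :=
    le_of_mul_le_mul_right (by linarith [hbound]) hgx0
  have htv : (1 / 2) * ‖lam‖ ^ t ≤ tv (fun y => (Q ^ t) x0 y) pi := by
    unfold tv
    have : (0:ℝ) ≤ 1/2 := by norm_num
    nlinarith [habs]
  calc (1 / 2) * ‖lam‖ ^ t ≤ tv (fun y => (Q ^ t) x0 y) pi := htv
    _ ≤ Finset.univ.sup' Finset.univ_nonempty fun x => tv (fun y => (Q ^ t) x y) pi :=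
        Finset.le_sup' (fun x => tv (fun y => (Q ^ t) x y) pi) (Finset.mem_univ x0)

end Stmt10
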